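/- Consider the points a_1 = e_1, ..., a_{r-1} = e_{r-1}, and a_r = (u, u, ..., u) in ℝ^{r-1}, where u = 1/(r-1) + √(3/(r-1) + 1/(r-1)²) and r ≥ 2. Then the minimum over c ∈ ℝ^{r-1} of ∑_{i=1}^r ‖a_i - c‖ equals √(r(r-1)) + √(3 + 1/(r-1)) − √(r/(r-1)). -/

import Mathlib

/-- The points `a_1 = e_1, ..., a_{r-1} = e_{r-1}`, `a_r = (u, ..., u)` in `ℝ^{r-1}`. -/
noncomputable def anPoint (r : ℕ) (u : ℝ) (i : Fin r) : EuclideanSpace ℝ (Fin (r - 1)) :=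
  (WithLp.equiv 2 (Fin (r - 1) → ℝ)).symm
    (fun j => if (i : ℕ) < r - 1 then (if (j : ℕ) = (i : ℕ) then 1 else 0) else u)

open RealInnerProductSpace

lemma lb_lemma {E : Type*} [NormedAddCommGroup E] [InnerProductSpace ℝ E]
    {ι : Type*} [Fintype ι] (v a : ι → E) (c : E)
    (hv : ∀ i, ‖v i‖ ≤ 1) (hker : ∑ i, ⟪v i, c⟫ = 0) :
    ∑ i, ⟪v i, a i⟫ ≤ ∑ i, ‖a i - c‖ := by
  have h1 : ∀ i, ⟪v i, a i⟫ - ⟪v i, c⟫ ≤ ‖a i - c‖ := by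
    intro i
    calc ⟪v i, a i⟫ - ⟪v i, c⟫ = ⟪v i, a i - c⟫ := by rw [inner_sub_right]
    _ ≤ ‖v i‖ * ‖a i - c‖ := real_inner_le_norm _ _
    _ ≤ 1 * ‖a i - c‖ := mul_le_mul_of_nonneg_right (hv i) (norm_nonneg _)
    _ = ‖a i - c‖ := one_mul _
  calc ∑ i, ⟪v i, a i⟫ = ∑ i, (⟪v i, a i⟫ - ⟪v i, c⟫) := by
        rw [Finset.sum_sub_distrib, hker, sub_zero]
  _ ≤ _ := Finset.sum_le_sum (fun i _ => h1 i)

lemma ind1 (m k : ℕ) (hk : k < m) (A : ℝ) :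
    ∑ j : Fin m, (if (j:ℕ) = k then A else 0) = A := by
  have h : ∀ j : Fin m, ((j:ℕ) = k) = (j = ⟨k, hk⟩) := fun j => by
    simp [Fin.ext_iff]
  simp_rw [h, Finset.sum_ite_eq']
  simp

lemma ind2 (m k : ℕ) (hk : k < m) (A : ℝ) :
    ∑ j : Fin m, (if k = (j:ℕ) then A else 0) = A := by
  have h : ∀ j : Fin m, (k = (j:ℕ)) = (j = ⟨k, hk⟩) := fun j => by
    simp [Fin.ext_iff, eq_comm]
  simp_rw [h, Finset.sum_ite_eq']
  simp

lemma sumsq (m k : ℕ) (hk : k < m) (x y : ℝ) :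
    ∑ j : Fin m, ((if (j:ℕ) = k then x else 0) - y)^2
      = (x-y)^2 - y^2 + (m:ℝ)*y^2 := by
  have h : ∀ j : Fin m, ((if (j:ℕ) = k then x else 0) - y)^2
      = (if (j:ℕ) = k then (x-y)^2 - y^2 else 0) + y^2 := by
    intro j; split <;> ring
  simp_rw [h]
  rw [Finset.sum_add_distrib, ind1 m k hk, Finset.sum_const, Finset.card_univ,
    Fintype.card_fin, nsmul_eq_mul]

lemma norm_symm (m : ℕ) (f : Fin m → ℝ) :
    ‖(WithLp.equiv 2 (Fin m → ℝ)).symm f‖ = Real.sqrt (∑ j, (f j)^2) := by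
  rw [EuclideanSpace.norm_eq]
  congr 1
  exact Finset.sum_congr rfl fun j _ => by simp [WithLp.equiv_symm_apply, PiLp.toLp_apply, sq_abs]

lemma norm_symm_diff (m : ℕ) (f g : Fin m → ℝ) :
    ‖(WithLp.equiv 2 (Fin m → ℝ)).symm f - (WithLp.equiv 2 (Fin m → ℝ)).symm g‖
      = Real.sqrt (∑ j, (f j - g j)^2) := by
  rw [EuclideanSpace.norm_eq]
  congr 1
  exact Finset.sum_congr rfl fun j _ => by simp [WithLp.equiv_symm_apply, PiLp.toLp_apply, sq_abs]

lemma inner_symm (m : ℕ) (f : Fin m → ℝ) (c : EuclideanSpace ℝ (Fin m)) :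
    ⟪(WithLp.equiv 2 (Fin m → ℝ)).symm f, c⟫ = ∑ j, f j * c j := by
  simp [PiLp.inner_apply, RCLike.inner_apply, WithLp.equiv_symm_apply, PiLp.toLp_apply, mul_comm]


lemma scalars (N sN sR s3 u t d1 : ℝ) (hN : 1 ≤ N)
    (hsN : sN^2 = N) (hsNp : 0 < sN)
    (hsR : sR^2 = N+1) (hsRp : 0 < sR)
    (hs3 : s3^2 = 3*N+1) (hs3p : 0 < s3)
    (hu' : u = (1+s3)/N) (ht : t = (sR+1)/(N*sR)) (hd1 : d1 = sN/sR) :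
    (1-t)^2 - t^2 + N*t^2 = d1^2 ∧ (1 - N*t)/d1 + 1/sN = 0 ∧ 0 ≤ u - t ∧
    N*d1 + sN*(u - t) = sR*sN + s3/sN - sR/sN ∧
    N*((1-t)/d1) + N*u/sN = sR*sN + s3/sN - sR/sN := by
  have hN0 : (0:ℝ) < N := by linarith
  refine ⟨?_, ?_, ?_, ?_, ?_⟩
  · rw [ht, hd1]; field_simp; ring_nf
    linear_combination (N^2*(sR^2-1) - N^2*sR^2) * hsN + (N^2 - N) * hsR
  · have : (1 - N*t)/d1 = -(1/sN) := by rw [ht, hd1]; field_simp; ring_nf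
    rw [this]; ring
  · rw [ht, hu']
    rw [div_sub_div _ _ (by positivity) (by positivity), le_div_iff₀ (by positivity)]
    have h1 : 1 ≤ sR := by nlinarith
    have h2 : 2 ≤ s3 := by nlinarith
    nlinarith [mul_le_mul h1 h2 (by norm_num) (by linarith)]
  · rw [ht, hd1, hu']; field_simp; ring_nf
    linear_combination (-1 + N*sR - N*sR^2 - N*sR^2*s3 + N^2 + N^2*sR^3 - N^3*sR + sR*s3 + (-(N*sR) + N*sR^2*s3 + N^3*sR - N^2*sR^3)) * hsN + ((N-N^2) + sR*(N^3-N^2) - N^2*(N-1)*sR) * hsR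
  · rw [ht, hd1, hu']; field_simp; ring_nf
    linear_combination (-sR) * hsN

lemma aux (n : ℕ) (hn : 1 ≤ n) (u : ℝ)
    (hu : u = 1 / (n:ℝ) + Real.sqrt (3 / (n:ℝ) + 1 / (n:ℝ)^2)) :
    IsLeast (Set.range (fun c : EuclideanSpace ℝ (Fin (n+1-1)) =>
        ∑ i : Fin (n+1), ‖anPoint (n+1) u i - c‖))
      (Real.sqrt (((n:ℝ)+1) * (n:ℝ)) + Real.sqrt (3 + 1 / (n:ℝ)) -
        Real.sqrt (((n:ℝ)+1) / (n:ℝ))) := by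
  have hN : (1:ℝ) ≤ (n:ℝ) := by exact_mod_cast hn
  set N : ℝ := (n : ℝ) with hNdef
  have hN0 : (0:ℝ) < N := by linarith
  set sN := Real.sqrt N with hsNdef
  set sR := Real.sqrt (N+1) with hsRdef
  set s3 := Real.sqrt (3*N+1) with hs3def
  have hsN : sN^2 = N := Real.sq_sqrt hN0.le
  have hsNp : 0 < sN := Real.sqrt_pos.mpr hN0
  have hsR : sR^2 = N+1 := Real.sq_sqrt (by linarith)
  have hsRp : 0 < sR := Real.sqrt_pos.mpr (by linarith)
  have hs3 : s3^2 = 3*N+1 := Real.sq_sqrt (by linarith)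
  have hs3p : 0 < s3 := Real.sqrt_pos.mpr (by linarith)
  have hu' : u = (1+s3)/N := by
    rw [hu]
    have h1 : 3/N + 1/N^2 = (3*N+1)/N^2 := by field_simp
    rw [h1, Real.sqrt_div (by linarith), Real.sqrt_sq hN0.le, ← hs3def]
    field_simp
  have hV : Real.sqrt ((N+1) * N) + Real.sqrt (3 + 1/N) - Real.sqrt ((N+1)/N)
      = sR*sN + s3/sN - sR/sN := by
    rw [Real.sqrt_mul (by linarith) N, ← hsRdef, ← hsNdef]
    rw [Real.sqrt_div (by linarith) N, ← hsRdef, ← hsNdef]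
    have h1 : 3 + 1/N = (3*N+1)/N := by field_simp
    rw [h1, Real.sqrt_div (by linarith) N, ← hs3def, ← hsNdef]
  have hcard : ((n+1-1:ℕ):ℝ) = N := by rw [hNdef]; norm_num
  clear_value N sN sR s3
  clear hu
  set t : ℝ := (sR+1)/(N*sR) with ht
  set d1 : ℝ := sN/sR with hd1
  have hd1p : 0 < d1 := div_pos hsNp hsRp
  clear_value t d1
  obtain ⟨hA, hB, hE, hC, hD⟩ :=
    scalars N sN sR s3 u t d1 hN hsN hsNp hsR hsRp hs3 hs3p hu' ht hd1
  rw [hV]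
  -- rewriting the points
  have hPoint : ∀ i : Fin n, anPoint (n+1) u (Fin.castSucc i)
      = (WithLp.equiv 2 (Fin (n+1-1) → ℝ)).symm
          (fun j => if (j:ℕ) = (i:ℕ) then 1 else 0) := by
    intro i
    simp only [anPoint, Fin.coe_castSucc]
    congr 1
    funext j
    rw [if_pos (show (i:ℕ) < n+1-1 by have := i.isLt; omega)]
  have hLast : anPoint (n+1) u (Fin.last n)
      = (WithLp.equiv 2 (Fin (n+1-1) → ℝ)).symm (fun _ => u) := by
    simp only [anPoint, Fin.val_last]
    congr 1
    funext j
    rw [if_neg (by omega)]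
  constructor
  · -- membership
    refine ⟨(WithLp.equiv 2 (Fin (n+1-1) → ℝ)).symm (fun _ => t), ?_⟩
    show ∑ i : Fin (n+1),
        ‖anPoint (n+1) u i - (WithLp.equiv 2 (Fin (n+1-1) → ℝ)).symm (fun _ => t)‖
      = sR*sN + s3/sN - sR/sN
    rw [Fin.sum_univ_castSucc]
    have hterm : ∀ i : Fin n,
        ‖anPoint (n+1) u (Fin.castSucc i)
          - (WithLp.equiv 2 (Fin (n+1-1) → ℝ)).symm (fun _ => t)‖ = d1 := by
      intro i
      rw [hPoint i, norm_symm_diff,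
        sumsq (n+1-1) (i:ℕ) (by have := i.isLt; omega) 1 t, hcard, hA,
        Real.sqrt_sq hd1p.le]
    have hlast : ‖anPoint (n+1) u (Fin.last n)
        - (WithLp.equiv 2 (Fin (n+1-1) → ℝ)).symm (fun _ => t)‖ = sN*(u-t) := by
      rw [hLast, norm_symm_diff]
      rw [Finset.sum_const, Finset.card_univ, Fintype.card_fin, nsmul_eq_mul, hcard]
      rw [Real.sqrt_mul hN0.le, Real.sqrt_sq hE, ← hsNdef]
    simp only [hterm, hlast]
    rw [Finset.sum_const, Finset.card_univ, Fintype.card_fin, nsmul_eq_mul, ← hNdef, hC]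
  · -- lower bound
    rintro x ⟨c, rfl⟩
    set F : Fin (n+1) → Fin (n+1-1) → ℝ := fun i j =>
      if (i:ℕ) < n+1-1 then ((if (j:ℕ) = (i:ℕ) then 1 else 0) - t)/d1 else 1/sN
      with hF
    have hnorms : ∀ i : Fin (n+1),
        ‖(WithLp.equiv 2 (Fin (n+1-1) → ℝ)).symm (F i)‖ ≤ 1 := by
      intro i
      rw [norm_symm]
      by_cases hi : (i:ℕ) < n+1-1
      · have h2 : ∀ j : Fin (n+1-1), (F i j)^2
            = ((if (j:ℕ) = (i:ℕ) then 1/d1 else 0) - t/d1)^2 := by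
          intro j
          simp only [hF, if_pos hi]
          split <;> ring
        simp only [h2]
        rw [sumsq (n+1-1) (i:ℕ) hi (1/d1) (t/d1), hcard]
        have h3 : (1/d1 - t/d1)^2 - (t/d1)^2 + N*(t/d1)^2 = 1 := by
          have h4 : (1/d1 - t/d1)^2 - (t/d1)^2 + N*(t/d1)^2
              = ((1-t)^2 - t^2 + N*t^2)/d1^2 := by field_simp
          rw [h4, hA]
          field_simp
        rw [h3, Real.sqrt_one]
      · simp only [hF, if_neg hi]
        rw [Finset.sum_const, Finset.card_univ, Fintype.card_fin, nsmul_eq_mul, hcard]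
        have h3 : N * (1/sN)^2 = 1 := by
          rw [one_div, inv_pow, hsN]
          exact mul_inv_cancel₀ (by positivity)
        rw [h3, Real.sqrt_one]
    have hker : ∑ i : Fin (n+1), ⟪(WithLp.equiv 2 (Fin (n+1-1) → ℝ)).symm (F i), c⟫ = 0 := by
      have hcol : ∀ j : Fin (n+1-1), ∑ i : Fin (n+1), F i j = 0 := by
        intro j
        rw [Fin.sum_univ_castSucc]
        have h1 : ∀ i : Fin n, F (Fin.castSucc i) j
            = (if (j:ℕ) = (i:ℕ) then 1/d1 else 0) - t/d1 := by
          intro i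
          simp only [hF, Fin.coe_castSucc]
          rw [if_pos (show (i:ℕ) < n+1-1 by have := i.isLt; omega)]
          split <;> ring
        have h2 : F (Fin.last n) j = 1/sN := by
          simp only [hF, Fin.val_last]
          rw [if_neg (by omega)]
        simp only [h1, h2]
        rw [Finset.sum_sub_distrib, ind2 n (j:ℕ) (by have := j.isLt; omega) (1/d1),
          Finset.sum_const, Finset.card_univ, Fintype.card_fin, nsmul_eq_mul, ← hNdef]
        linear_combination hB
      calc ∑ i : Fin (n+1), ⟪(WithLp.equiv 2 (Fin (n+1-1) → ℝ)).symm (F i), c⟫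
          = ∑ i : Fin (n+1), ∑ j, F i j * c j := by
            exact Finset.sum_congr rfl fun i _ => inner_symm _ _ _
        _ = ∑ j, ∑ i : Fin (n+1), F i j * c j := Finset.sum_comm
        _ = ∑ j, (∑ i : Fin (n+1), F i j) * c j := by
            exact Finset.sum_congr rfl fun j _ => (Finset.sum_mul _ _ _).symm
        _ = 0 := by simp only [hcol, zero_mul, Finset.sum_const_zero]
    have hval : ∑ i : Fin (n+1),
        ⟪(WithLp.equiv 2 (Fin (n+1-1) → ℝ)).symm (F i), anPoint (n+1) u i⟫
        = sR*sN + s3/sN - sR/sN := by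
      rw [Fin.sum_univ_castSucc]
      have h1 : ∀ i : Fin n,
          ⟪(WithLp.equiv 2 (Fin (n+1-1) → ℝ)).symm (F (Fin.castSucc i)),
            anPoint (n+1) u (Fin.castSucc i)⟫ = (1-t)/d1 := by
        intro i
        rw [hPoint i, inner_symm]
        simp only [WithLp.equiv_symm_apply, PiLp.toLp_apply]
        have h2 : ∀ j : Fin (n+1-1), F (Fin.castSucc i) j
            * (if (j:ℕ) = (i:ℕ) then (1:ℝ) else 0)
            = (if (j:ℕ) = (i:ℕ) then (1-t)/d1 else 0) := by
          intro j
          simp only [hF, Fin.coe_castSucc]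
          rw [if_pos (show (i:ℕ) < n+1-1 by have := i.isLt; omega)]
          by_cases h : (j:ℕ) = (i:ℕ) <;> simp [h]
        simp only [h2]
        rw [ind1 (n+1-1) (i:ℕ) (by have := i.isLt; omega) ((1-t)/d1)]
      have h2 : ⟪(WithLp.equiv 2 (Fin (n+1-1) → ℝ)).symm (F (Fin.last n)),
          anPoint (n+1) u (Fin.last n)⟫ = N*(1/sN*u) := by
        rw [hLast, inner_symm]
        simp only [WithLp.equiv_symm_apply, PiLp.toLp_apply]
        have h3 : ∀ j : Fin (n+1-1), F (Fin.last n) j * u = 1/sN * u := by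
          intro j
          simp only [hF, Fin.val_last]
          rw [if_neg (by omega)]
        simp only [h3]
        rw [Finset.sum_const, Finset.card_univ, Fintype.card_fin, nsmul_eq_mul, hcard]
      simp only [h1, h2]
      rw [Finset.sum_const, Finset.card_univ, Fintype.card_fin, nsmul_eq_mul, ← hNdef]
      linear_combination hD
    calc sR*sN + s3/sN - sR/sN
        = ∑ i : Fin (n+1),
            ⟪(WithLp.equiv 2 (Fin (n+1-1) → ℝ)).symm (F i), anPoint (n+1) u i⟫ := hval.symm
      _ ≤ ∑ i : Fin (n+1), ‖anPoint (n+1) u i - c‖ :=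
          lb_lemma _ _ c hnorms hker

theorem stmt9 (r : ℕ) (hr : 2 ≤ r)
    (u : ℝ)
    (hu : u = 1 / ((r : ℝ) - 1) + Real.sqrt (3 / ((r : ℝ) - 1) + 1 / ((r : ℝ) - 1) ^ 2)) :
    IsLeast (Set.range (fun c : EuclideanSpace ℝ (Fin (r - 1)) =>
        ∑ i : Fin r, ‖anPoint r u i - c‖))
      (Real.sqrt ((r : ℝ) * ((r : ℝ) - 1)) + Real.sqrt (3 + 1 / ((r : ℝ) - 1)) -
        Real.sqrt ((r : ℝ) / ((r : ℝ) - 1))) := by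
  
  obtain ⟨n, rfl⟩ : ∃ n, r = n + 1 := ⟨r - 1, by omega⟩
  have hc : ((n+1 : ℕ) : ℝ) - 1 = (n : ℝ) := by push_cast; ring
  rw [hc] at hu ⊢
  have hc2 : ((n+1 : ℕ) : ℝ) = (n : ℝ) + 1 := by push_cast; ring
  rw [hc2]
  exact aux n (by omega) u hu
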